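/- The function g is differentiable on ℝ, and its derivative is given by g'(z) = (∫_a^b E(t)·exp(z·E(t)) dt) / (∫_a^b exp(z·E(t)) dt) for every z ∈ ℝ. -/

import Mathlib

/-- Context: `a < b`, `E` continuous on `[a,b]`,
`g z = log( (1/(b-a)) * ∫_a^b exp(z * E t) dt )`.
Statement: `g` is differentiable on `ℝ` and its derivative is
`g'(z) = (∫_a^b E t * exp(z * E t) dt) / (∫_a^b exp(z * E t) dt)`. -/
theorem stmt_0 (a b : ℝ) (hab : a < b) (E : ℝ → ℝ)
    (hE : ContinuousOn E (Set.Icc a b))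
    (g : ℝ → ℝ)
    (hg : ∀ z : ℝ, g z = Real.log ((1 / (b - a)) * ∫ t in a..b, Real.exp (z * E t))) :
    Differentiable ℝ g ∧
      ∀ z : ℝ, deriv g z =
        (∫ t in a..b, E t * Real.exp (z * E t)) / (∫ t in a..b, Real.exp (z * E t)) := by
  have hab' : (b - a) ≠ 0 := sub_ne_zero.mpr hab.ne'
  have huIcc : Set.uIcc a b = Set.Icc a b := Set.uIcc_of_le hab.le
  have huIoc : Set.uIoc a b = Set.Ioc a b := Set.uIoc_of_le hab.le
  obtain ⟨M, hM⟩ : ∃ M, ∀ t ∈ Set.Icc a b, ‖E t‖ ≤ M :=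
    isCompact_Icc.exists_bound_of_continuousOn hE
  -- continuity helpers
  have hEic : ∀ z : ℝ, ContinuousOn (fun t => Real.exp (z * E t)) (Set.Icc a b) := fun z =>
    (Real.continuous_exp.comp_continuousOn ((continuousOn_const).mul hE))
  have hIntF : ∀ z : ℝ, IntervalIntegrable (fun t => Real.exp (z * E t))
      MeasureTheory.volume a b := fun z => by
    apply ContinuousOn.intervalIntegrable
    rw [huIcc]; exact hEic z
  -- positivity of the integral
  have hFpos : ∀ z : ℝ, 0 < ∫ t in a..b, Real.exp (z * E t) := by
    intro z
    apply intervalIntegral.intervalIntegral_pos_of_pos_on (hIntF z)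
    · intro t _; exact Real.exp_pos _
    · exact hab
  -- derivative of the integral
  have key : ∀ z : ℝ, HasDerivAt (fun z => ∫ t in a..b, Real.exp (z * E t))
      (∫ t in a..b, E t * Real.exp (z * E t)) z := by
    intro z
    have hmeas : ∀ x : ℝ, MeasureTheory.AEStronglyMeasurable
        (fun t => Real.exp (x * E t)) (MeasureTheory.volume.restrict (Set.uIoc a b)) := by
      intro x
      rw [huIoc]
      exact ((hEic x).mono Set.Ioc_subset_Icc_self).aestronglyMeasurable measurableSet_Ioc
    have hmeas' : MeasureTheory.AEStronglyMeasurable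
        (fun t => E t * Real.exp (z * E t)) (MeasureTheory.volume.restrict (Set.uIoc a b)) := by
      rw [huIoc]
      exact ((hE.mul (hEic z)).mono Set.Ioc_subset_Icc_self).aestronglyMeasurable
        measurableSet_Ioc
    have := intervalIntegral.hasDerivAt_integral_of_dominated_loc_of_deriv_le
      (F := fun x t => Real.exp (x * E t)) (F' := fun x t => E t * Real.exp (x * E t))
      (x₀ := z) (bound := fun _ => M * Real.exp ((|z| + 1) * M))
      (s := Metric.ball z 1) (Metric.ball_mem_nhds z one_pos)
      (Filter.Eventually.of_forall hmeas) (hIntF z) hmeas'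
      (Filter.Eventually.of_forall ?_)
      (intervalIntegrable_const)
      (Filter.Eventually.of_forall ?_)
    · exact this.2
    · intro t ht x hx
      rw [huIoc] at ht
      have hEt := hM t (Set.Ioc_subset_Icc_self ht)
      have hMnn : (0:ℝ) ≤ M := le_trans (norm_nonneg _) hEt
      have hxz : |x| ≤ |z| + 1 := by
        have := abs_sub_abs_le_abs_sub x z
        have hd : |x - z| < 1 := by simpa [Real.dist_eq] using hx
        linarith
      have h1 : x * E t ≤ (|z| + 1) * M := by
        calc x * E t ≤ |x * E t| := le_abs_self _
          _ = |x| * |E t| := abs_mul _ _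
          _ ≤ (|z| + 1) * M := by
              apply mul_le_mul hxz hEt (abs_nonneg _)
              positivity
      have : ‖E t * Real.exp (x * E t)‖ = |E t| * Real.exp (x * E t) := by
        rw [norm_mul, Real.norm_eq_abs, Real.norm_eq_abs,
          abs_of_pos (Real.exp_pos _)]
      rw [this]
      exact mul_le_mul hEt (Real.exp_le_exp.mpr h1) (Real.exp_pos _).le hMnn
    · intro t _ x _
      have : HasDerivAt (fun x : ℝ => x * E t) (E t) x := hasDerivAt_mul_const (E t)
      simpa [mul_comm] using this.exp
  -- derivative of g
  have hgderiv : ∀ z : ℝ, HasDerivAt g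
      ((∫ t in a..b, E t * Real.exp (z * E t)) / (∫ t in a..b, Real.exp (z * E t))) z := by
    intro z
    have h1 : HasDerivAt (fun z => (1 / (b - a)) * ∫ t in a..b, Real.exp (z * E t))
        ((1 / (b - a)) * ∫ t in a..b, E t * Real.exp (z * E t)) z := (key z).const_mul _
    have hne : (1 / (b - a)) * (∫ t in a..b, Real.exp (z * E t)) ≠ 0 := by
      have := hFpos z
      positivity
    have h2 := h1.log hne
    have heq : (fun z => Real.log ((1 / (b - a)) * ∫ t in a..b, Real.exp (z * E t))) = g := by
      funext x; rw [hg x]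
    rw [heq] at h2
    convert h2 using 1
    rw [mul_div_mul_left _ _ (one_div_ne_zero hab')]
  exact ⟨fun z => (hgderiv z).differentiableAt, fun z => (hgderiv z).deriv⟩
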